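/- For every nonnegative integer k and every real t, the k-th derivative of g(t) = 1/(e^t+1) satisfies g^{(k)}(t) = (-1)^{k+1} ∑_{m=1}^{k+1} (-1)^m (m-1)! S(k+1,m) (1/(e^t+1))^m, where S denotes Stirling numbers of the second kind. -/

import Mathlib

/-- Stirling numbers of the second kind. -/
def stirling2 : ℕ → ℕ → ℕ
  | 0, 0 => 1
  | 0, _ + 1 => 0
  | _ + 1, 0 => 0
  | n + 1, k + 1 => (k + 1) * stirling2 n (k + 1) + stirling2 n k

lemma stirling2_eq_zero_of_lt : ∀ {n m : ℕ}, n < m → stirling2 n m = 0 := by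
  intro n
  induction n with
  | zero => intro m h; cases m with | zero => omega | succ m => rfl
  | succ n ih =>
    intro m h
    cases m with
    | zero => omega
    | succ m =>
      show (m + 1) * stirling2 n (m + 1) + stirling2 n m = 0
      rw [ih (by omega), ih (by omega)]
      simp

lemma sum_Icc_one (n : ℕ) (f : ℕ → ℝ) :
    ∑ m ∈ Finset.Icc 1 n, f m = ∑ i ∈ Finset.range n, f (i + 1) := by
  rw [← Finset.Ico_add_one_right_eq_Icc, Finset.sum_Ico_eq_sum_range]
  simp [add_comm]

lemma key (k : ℕ) (x : ℝ) :
    ((-1 : ℝ)) ^ (k + 1) * ∑ m ∈ Finset.Icc 1 (k + 1),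
        (-1) ^ m * ((m - 1).factorial : ℝ) * (stirling2 (k + 1) m : ℝ) *
          ((m : ℝ) * x ^ (m - 1) * (x ^ 2 - x))
      = (-1) ^ (k + 1 + 1) * ∑ m ∈ Finset.Icc 1 (k + 1 + 1),
          (-1) ^ m * ((m - 1).factorial : ℝ) * (stirling2 (k + 1 + 1) m : ℝ) * x ^ m := by
  rw [sum_Icc_one, sum_Icc_one]
  have hrhs : ∀ i, ((-1 : ℝ)) ^ (i + 1) * (((i + 1) - 1).factorial : ℝ) *
      (stirling2 (k + 1 + 1) (i + 1) : ℝ) * x ^ (i + 1)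
      = (-1) ^ (i + 1) * (i.factorial : ℝ) *
          ((i + 1 : ℕ) * (stirling2 (k + 1) (i + 1) : ℝ) + (stirling2 (k + 1) i : ℝ)) * x ^ (i + 1) := by
    intro i
    have : stirling2 (k + 1 + 1) (i + 1) = (i + 1) * stirling2 (k + 1) (i + 1) + stirling2 (k + 1) i := rfl
    rw [this]
    push_cast
    ring
  simp only [hrhs]
  have hsplit : ∀ i, ((-1 : ℝ)) ^ (i + 1) * (i.factorial : ℝ) *
      ((i + 1 : ℕ) * (stirling2 (k + 1) (i + 1) : ℝ) + (stirling2 (k + 1) i : ℝ)) * x ^ (i + 1)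
      = (-1) ^ (i + 1) * ((i + 1).factorial : ℝ) * (stirling2 (k + 1) (i + 1) : ℝ) * x ^ (i + 1)
        + (-1) ^ (i + 1) * (i.factorial : ℝ) * (stirling2 (k + 1) i : ℝ) * x ^ (i + 1) := by
    intro i
    rw [Nat.factorial_succ]
    push_cast
    ring
  simp only [hsplit, Finset.sum_add_distrib]
  rw [Finset.sum_range_succ (fun i => ((-1 : ℝ)) ^ (i + 1) * ((i + 1).factorial : ℝ) *
        (stirling2 (k + 1) (i + 1) : ℝ) * x ^ (i + 1)),
      Finset.sum_range_succ' (fun i => ((-1 : ℝ)) ^ (i + 1) * (i.factorial : ℝ) *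
        (stirling2 (k + 1) i : ℝ) * x ^ (i + 1))]
  have hz1 : stirling2 (k + 1) 0 = 0 := rfl
  rw [stirling2_eq_zero_of_lt (by omega : k + 1 < k + 1 + 1), hz1]
  simp only [Nat.cast_zero, mul_zero, zero_mul, add_zero, Nat.add_sub_cancel]
  simp only [mul_add, Finset.mul_sum, ← Finset.sum_add_distrib]
  refine Finset.sum_congr rfl fun i _ => ?_
  rw [Nat.factorial_succ]
  push_cast
  ring

/-- The `k`-th derivative of `1/(e^t+1)` equals
`(-1)^{k+1} ∑_{m=1}^{k+1} (-1)^m (m-1)! S(k+1,m) (1/(e^t+1))^m`. -/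
theorem iteratedDeriv_one_div_exp_add_one (k : ℕ) (t : ℝ) :
    iteratedDeriv k (fun s => 1 / (Real.exp s + 1)) t
      = (-1) ^ (k + 1) * ∑ m ∈ Finset.Icc 1 (k + 1),
          (-1) ^ m * ((m - 1).factorial : ℝ) * (stirling2 (k + 1) m : ℝ) *
            (1 / (Real.exp t + 1)) ^ m := by
  induction k generalizing t with
  | zero =>
    have h1 : stirling2 1 1 = 1 := rfl
    simp [iteratedDeriv_zero, h1]
  | succ k ih =>
    have hpos : ∀ s : ℝ, Real.exp s + 1 ≠ 0 := fun s => by positivity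
    have hu : HasDerivAt (fun s => 1 / (Real.exp s + 1))
        ((1 / (Real.exp t + 1)) ^ 2 - 1 / (Real.exp t + 1)) t := by
      have h := ((Real.hasDerivAt_exp t).add_const 1).inv (hpos t)
      have heq : -(Real.exp t) / (Real.exp t + 1) ^ 2
          = (1 / (Real.exp t + 1)) ^ 2 - 1 / (Real.exp t + 1) := by
        field_simp
        ring
      simpa [one_div, heq, Pi.inv_def] using h
    set x := 1 / (Real.exp t + 1) with hx
    have hF : HasDerivAt (fun s : ℝ => (-1 : ℝ) ^ (k + 1) * ∑ m ∈ Finset.Icc 1 (k + 1),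
        (-1) ^ m * ((m - 1).factorial : ℝ) * (stirling2 (k + 1) m : ℝ) *
          (1 / (Real.exp s + 1)) ^ m)
        ((-1 : ℝ) ^ (k + 1) * ∑ m ∈ Finset.Icc 1 (k + 1),
          (-1) ^ m * ((m - 1).factorial : ℝ) * (stirling2 (k + 1) m : ℝ) *
            ((m : ℝ) * x ^ (m - 1) * (x ^ 2 - x))) t := by
      refine HasDerivAt.const_mul _ ?_
      refine HasDerivAt.fun_sum fun m _ => ?_
      exact ((hu.pow m).const_mul _)
    rw [iteratedDeriv_succ]
    have hfun : iteratedDeriv k (fun s => 1 / (Real.exp s + 1))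
        = fun s : ℝ => (-1 : ℝ) ^ (k + 1) * ∑ m ∈ Finset.Icc 1 (k + 1),
            (-1) ^ m * ((m - 1).factorial : ℝ) * (stirling2 (k + 1) m : ℝ) *
              (1 / (Real.exp s + 1)) ^ m := funext fun s => ih s
    rw [hfun, hF.deriv]
    exact key k x
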